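/- Fix p ≥ 2 and define φ(t) = p·t^{p−1}/log(1+t) for t > 0, φ(0)=0, and Φ(t) = ∫₀ᵗ φ(τ)dτ. Then for all t > 0, p − 1 ≤ t·φ(t)/Φ(t) ≤ p. -/

import Mathlib

open Set intervalIntegral

lemma log_concave_key {t τ : ℝ} (ht : 0 < t) (hτ : 0 < τ) (hτt : τ ≤ t) :
    τ * Real.log (1 + t) ≤ t * Real.log (1 + τ) := by
  have hcon := strictConcaveOn_log_Ioi.concaveOn
  have h1 : (1:ℝ) ∈ Ioi (0:ℝ) := by norm_num
  have h2 : (1 + t) ∈ Ioi (0:ℝ) := by simp; linarith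
  have ha : 0 ≤ 1 - τ / t := by
    have : τ / t ≤ 1 := (div_le_one ht).2 hτt
    linarith
  have hb : 0 ≤ τ / t := by positivity
  have hab : (1 - τ / t) + τ / t = 1 := by ring
  have hkey := hcon.2 h1 h2 ha hb hab
  simp only [smul_eq_mul, mul_one, Real.log_one] at hkey
  have harg : 1 - τ / t + τ / t * (1 + t) = 1 + τ := by field_simp; ring
  rw [harg] at hkey
  have h3 : τ / t * Real.log (1 + t) ≤ Real.log (1 + τ) := by linarith
  calc τ * Real.log (1 + t) = t * (τ / t * Real.log (1 + t)) := by
        field_simp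
    _ ≤ t * Real.log (1 + τ) := mul_le_mul_of_nonneg_left h3 ht.le

theorem stmt_10 (p : ℝ) (hp : 2 ≤ p)
    (φ Φ : ℝ → ℝ) (hφ0 : φ 0 = 0)
    (hφ : ∀ t > (0:ℝ), φ t = p * t ^ (p - 1) / Real.log (1 + t))
    (hΦ : ∀ t ≥ (0:ℝ), Φ t = ∫ τ in (0:ℝ)..t, φ τ) :
    ∀ t > (0:ℝ), p - 1 ≤ t * φ t / Φ t ∧ t * φ t / Φ t ≤ p := by
  intro t ht
  have hp0 : (0:ℝ) < p := by linarith
  have hp1 : (0:ℝ) < p - 1 := by linarith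
  have hL : 0 < Real.log (1 + t) := Real.log_pos (by linarith)
  set L := Real.log (1 + t) with hLdef
  set l : ℝ → ℝ := fun τ => p * τ ^ (p - 1) / L with hl
  set u : ℝ → ℝ := fun τ => p * t * τ ^ (p - 2) / L with hu
  have hφnn : ∀ τ ∈ Ioc (0:ℝ) t, 0 ≤ φ τ := by
    intro τ hτ
    rw [hφ τ hτ.1]
    have hlog : 0 < Real.log (1 + τ) := Real.log_pos (by linarith [hτ.1])
    have hr : (0:ℝ) ≤ τ ^ (p - 1) := Real.rpow_nonneg hτ.1.le _
    positivity
  -- pointwise bounds on [0, t]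
  have hlow : ∀ τ ∈ Icc (0:ℝ) t, l τ ≤ φ τ := by
    intro τ hτ
    rcases eq_or_lt_of_le hτ.1 with h0 | h0
    · simp [hl, ← h0, Real.zero_rpow (by linarith : p - 1 ≠ 0), hφ0]
    · rw [hφ τ h0, hl]
      have hlog : 0 < Real.log (1 + τ) := Real.log_pos (by linarith)
      have hlogle : Real.log (1 + τ) ≤ L := by
        rw [hLdef]
        exact Real.log_le_log (by linarith) (by linarith [hτ.2])
      have hnum : 0 ≤ p * τ ^ (p - 1) := by
        have := Real.rpow_nonneg h0.le (p - 1); positivity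
      exact div_le_div_of_nonneg_left hnum hlog hlogle
  have hupp : ∀ τ ∈ Icc (0:ℝ) t, φ τ ≤ u τ := by
    intro τ hτ
    rcases eq_or_lt_of_le hτ.1 with h0 | h0
    · rw [← h0, hφ0, hu]
      have := Real.rpow_nonneg (le_refl (0:ℝ)) (p - 2)
      positivity
    · rw [hφ τ h0, hu]
      have hlog : 0 < Real.log (1 + τ) := Real.log_pos (by linarith)
      rw [div_le_div_iff₀ hlog hL]
      have hkey := log_concave_key ht h0 hτ.2
      have hτp : τ ^ (p - 1) = τ * τ ^ (p - 2) := by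
        rw [show p - 1 = 1 + (p - 2) by ring, Real.rpow_add h0, Real.rpow_one]
      rw [hτp]
      have h2 : (0:ℝ) ≤ τ ^ (p - 2) := Real.rpow_nonneg h0.le _
      calc p * (τ * τ ^ (p - 2)) * L = (p * τ ^ (p - 2)) * (τ * L) := by ring
        _ ≤ (p * τ ^ (p - 2)) * (t * Real.log (1 + τ)) :=
            mul_le_mul_of_nonneg_left hkey (by positivity)
        _ = p * t * τ ^ (p - 2) * Real.log (1 + τ) := by ring
  -- integrability
  have hil : IntervalIntegrable l MeasureTheory.volume 0 t := by
    have h := (intervalIntegral.intervalIntegrable_rpow (μ := MeasureTheory.volume)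
      (r := p - 1) (a := (0:ℝ)) (b := t) (Or.inl (by linarith)))
    exact (h.const_mul p).div_const L
  have hiu : IntervalIntegrable u MeasureTheory.volume 0 t := by
    have h := (intervalIntegral.intervalIntegrable_rpow (μ := MeasureTheory.volume)
      (r := p - 2) (a := (0:ℝ)) (b := t) (Or.inl (by linarith)))
    exact (h.const_mul (p * t)).div_const L
  have hmeas : MeasureTheory.AEStronglyMeasurable φ
      (MeasureTheory.volume.restrict (Set.uIoc (0:ℝ) t)) := by
    have hg : MeasureTheory.AEStronglyMeasurable
        (fun τ : ℝ => p * τ ^ (p - 1) / Real.log (1 + τ))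
        (MeasureTheory.volume.restrict (Set.uIoc (0:ℝ) t)) := by
      rw [uIoc_of_le ht.le]
      apply ContinuousOn.aestronglyMeasurable _ measurableSet_Ioc
      apply ContinuousOn.div
      · apply continuousOn_const.mul
        intro x hx
        exact (Real.continuousAt_rpow_const x (p - 1)
          (Or.inl (ne_of_gt hx.1))).continuousWithinAt
      · intro x hx
        exact ((Real.continuousAt_log (by linarith [hx.1] : (1:ℝ) + x ≠ 0)).comp
          (continuousAt_const.add continuousAt_id)).continuousWithinAt
      · intro x hx
        exact ne_of_gt (Real.log_pos (by linarith [hx.1]))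
    apply hg.congr
    rw [uIoc_of_le ht.le]
    apply MeasureTheory.ae_restrict_of_forall_mem measurableSet_Ioc
    intro x hx
    exact (hφ x hx.1).symm
  have hiφ : IntervalIntegrable φ MeasureTheory.volume 0 t := by
    apply hiu.mono_fun hmeas
    rw [uIoc_of_le ht.le]
    apply MeasureTheory.ae_restrict_of_forall_mem measurableSet_Ioc
    intro x hx
    show ‖φ x‖ ≤ ‖u x‖
    rw [Real.norm_eq_abs, Real.norm_eq_abs, abs_of_nonneg (hφnn x hx),
      abs_of_nonneg ((hφnn x hx).trans (hupp x ⟨hx.1.le, hx.2⟩))]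
    exact hupp x ⟨hx.1.le, hx.2⟩
  -- integral computations
  have hpm1 : p - 1 + 1 = p := by ring
  have hpm2 : p - 2 + 1 = p - 1 := by ring
  have hint1 : ∫ τ in (0:ℝ)..t, τ ^ (p - 1) = t ^ p / p := by
    rw [integral_rpow (Or.inl (by linarith)), hpm1, Real.zero_rpow hp0.ne']
    ring
  have hint2 : ∫ τ in (0:ℝ)..t, τ ^ (p - 2) = t ^ (p - 1) / (p - 1) := by
    rw [integral_rpow (Or.inl (by linarith)), hpm2, Real.zero_rpow hp1.ne']
    ring
  have hintl : ∫ τ in (0:ℝ)..t, l τ = t ^ p / L := by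
    have : ∫ τ in (0:ℝ)..t, l τ = ∫ τ in (0:ℝ)..t, (p / L) * τ ^ (p - 1) := by
      apply integral_congr; intro x _; rw [hl]; ring
    rw [this, intervalIntegral.integral_const_mul, hint1]
    field_simp
  have htp : t ^ p = t * t ^ (p - 1) := by
    rw [mul_comm, ← Real.rpow_add_one ht.ne']
    ring_nf
  have hintu : ∫ τ in (0:ℝ)..t, u τ = p * t ^ p / ((p - 1) * L) := by
    have : ∫ τ in (0:ℝ)..t, u τ = ∫ τ in (0:ℝ)..t, (p * t / L) * τ ^ (p - 2) := by
      apply integral_congr; intro x _; rw [hu]; ring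
    rw [this, intervalIntegral.integral_const_mul, hint2, htp]
    field_simp
  have h1 : t ^ p / L ≤ Φ t := by
    rw [hΦ t ht.le, ← hintl]
    exact integral_mono_on ht.le hil hiφ hlow
  have h2 : Φ t ≤ p * t ^ p / ((p - 1) * L) := by
    rw [hΦ t ht.le, ← hintu]
    exact integral_mono_on ht.le hiφ hiu hupp
  have htpp : 0 < t ^ p := Real.rpow_pos_of_pos ht p
  have hΦpos : 0 < Φ t := lt_of_lt_of_le (by positivity) h1
  have hφt : t * φ t = p * t ^ p / L := by
    rw [hφ t ht, htp]
    rw [← hLdef]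
    ring
  have heq1 : (p - 1) * (p * t ^ p / ((p - 1) * L)) = p * t ^ p / L := by
    field_simp
  have hub := mul_le_mul_of_nonneg_left h2 hp1.le
  rw [heq1] at hub
  have hlb := mul_le_mul_of_nonneg_left h1 hp0.le
  constructor
  · rw [le_div_iff₀ hΦpos, hφt]
    nlinarith [hub, hΦpos]
  · rw [div_le_iff₀ hΦpos, hφt]
    have heq2 : p * (t ^ p / L) = p * t ^ p / L := by ring
    rw [heq2] at hlb
    linarith
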